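/- arXiv:2309.14697 — 9 statements merged into one kernel-verified Lean document; each statement's English description precedes it below -/
import Mathlib

section
/- Let c, c₁, c₂ be real numbers and let U = {x ∈ ℝ : c₂ − cos(c·x + c₁) ≠ 0}. Then the function α : U → ℝ defined by α(x) = (c/2)·sin(c·x + c₁)/(c₂ − cos(c·x + c₁)) satisfies the Codazzi-like equation α''(x) + 6·α(x)·α'(x) + 4·α(x)³ + c²·α(x) = 0 at every point x ∈ U. -/
/-- The general-type function `α(x) = (c/2)·sin(c·x + c₁)/(c₂ − cos(c·x + c₁))`
satisfies the Codazzi-like equation `α'' + 6·α·α' + 4·α³ + c²·α = 0` at every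
point of `U = {x | c₂ − cos(c·x + c₁) ≠ 0}`. -/
theorem codazzi_general_solution (c c₁ c₂ : ℝ) (α : ℝ → ℝ)
    (hα : ∀ x : ℝ, α x = (c / 2) * Real.sin (c * x + c₁) / (c₂ - Real.cos (c * x + c₁))) :
    ∀ x : ℝ, c₂ - Real.cos (c * x + c₁) ≠ 0 →
      deriv (deriv α) x + 6 * α x * deriv α x + 4 * (α x) ^ 3 + c ^ 2 * α x = 0 := by
  intro x hx
  set φ : ℝ → ℝ := fun t =>
    (c ^ 2 / 2) * (c₂ * Real.cos (c * t + c₁) - 1) / (c₂ - Real.cos (c * t + c₁)) ^ 2 with hφdef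
  have hlin : ∀ y : ℝ, HasDerivAt (fun t => c * t + c₁) c y := by
    intro y
    simpa using ((hasDerivAt_id y).const_mul c).add_const c₁
  have hs : ∀ y : ℝ, HasDerivAt (fun t => Real.sin (c * t + c₁))
      (Real.cos (c * y + c₁) * c) y := fun y =>
    (Real.hasDerivAt_sin _).comp y (hlin y)
  have hg : ∀ y : ℝ, HasDerivAt (fun t => c₂ - Real.cos (c * t + c₁))
      (Real.sin (c * y + c₁) * c) y := by
    intro y
    have := ((Real.hasDerivAt_cos (c * y + c₁)).comp y (hlin y)).const_sub c₂
    simpa [mul_comm, mul_assoc, neg_mul] using this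
  -- derivative of α on U equals φ
  have hder : ∀ y : ℝ, c₂ - Real.cos (c * y + c₁) ≠ 0 → HasDerivAt α (φ y) y := by
    intro y hy
    have h1 : HasDerivAt (fun t => (c / 2) * Real.sin (c * t + c₁) /
        (c₂ - Real.cos (c * t + c₁)))
        (((c / 2) * (Real.cos (c * y + c₁) * c) * (c₂ - Real.cos (c * y + c₁)) -
          (c / 2) * Real.sin (c * y + c₁) * (Real.sin (c * y + c₁) * c)) /
          (c₂ - Real.cos (c * y + c₁)) ^ 2) y :=
      ((hs y).const_mul (c / 2)).div (hg y) hy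
    have h2 : HasDerivAt α
        (((c / 2) * (Real.cos (c * y + c₁) * c) * (c₂ - Real.cos (c * y + c₁)) -
          (c / 2) * Real.sin (c * y + c₁) * (Real.sin (c * y + c₁) * c)) /
          (c₂ - Real.cos (c * y + c₁)) ^ 2) y := by
      refine h1.congr_of_eventuallyEq ?_
      filter_upwards with t using hα t
    have heq : ((c / 2) * (Real.cos (c * y + c₁) * c) * (c₂ - Real.cos (c * y + c₁)) -
          (c / 2) * Real.sin (c * y + c₁) * (Real.sin (c * y + c₁) * c)) /
          (c₂ - Real.cos (c * y + c₁)) ^ 2 = φ y := by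
      rw [hφdef]
      have hpc : Real.sin (c * y + c₁) ^ 2 = 1 - Real.cos (c * y + c₁) ^ 2 := by
        have := Real.sin_sq_add_cos_sq (c * y + c₁)
        linarith
      field_simp
      linear_combination (-(c ^ 2)) * hpc
    exact heq ▸ h2
  -- second derivative
  have hUopen : IsOpen {y : ℝ | c₂ - Real.cos (c * y + c₁) ≠ 0} := by
    have hcont : Continuous fun y : ℝ => c₂ - Real.cos (c * y + c₁) := by continuity
    exact isOpen_ne.preimage hcont
  have hev : deriv α =ᶠ[nhds x] φ := by
    filter_upwards [hUopen.mem_nhds hx] with y hy using (hder y hy).deriv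
  have hφ' : HasDerivAt φ
      (((c ^ 2 / 2) * (c₂ * (-Real.sin (c * x + c₁) * c)) * (c₂ - Real.cos (c * x + c₁)) ^ 2 -
        (c ^ 2 / 2) * (c₂ * Real.cos (c * x + c₁) - 1) *
          (2 * (c₂ - Real.cos (c * x + c₁)) ^ 1 * (Real.sin (c * x + c₁) * c))) /
        ((c₂ - Real.cos (c * x + c₁)) ^ 2) ^ 2) x := by
    have hnum : HasDerivAt (fun t => (c ^ 2 / 2) * (c₂ * Real.cos (c * t + c₁) - 1))
        ((c ^ 2 / 2) * (c₂ * (-Real.sin (c * x + c₁) * c))) x := by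
      have hcos : HasDerivAt (fun t => Real.cos (c * t + c₁))
          (-Real.sin (c * x + c₁) * c) x :=
        (Real.hasDerivAt_cos _).comp x (hlin x)
      simpa [mul_comm, mul_assoc, mul_left_comm] using
        (((hcos.const_mul c₂).sub_const 1).const_mul (c ^ 2 / 2))
    have hden : HasDerivAt (fun t => (c₂ - Real.cos (c * t + c₁)) ^ 2)
        (2 * (c₂ - Real.cos (c * x + c₁)) ^ 1 * (Real.sin (c * x + c₁) * c)) x := by
      simpa using (hg x).fun_pow 2
    exact hnum.div hden (pow_ne_zero 2 hx)
  have hdd : deriv (deriv α) x =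
      ((c ^ 2 / 2) * (c₂ * (-Real.sin (c * x + c₁) * c)) * (c₂ - Real.cos (c * x + c₁)) ^ 2 -
        (c ^ 2 / 2) * (c₂ * Real.cos (c * x + c₁) - 1) *
          (2 * (c₂ - Real.cos (c * x + c₁)) ^ 1 * (Real.sin (c * x + c₁) * c))) /
        ((c₂ - Real.cos (c * x + c₁)) ^ 2) ^ 2 := by
    rw [hev.deriv_eq]
    exact hφ'.deriv
  have hd1 : deriv α x = φ x := (hder x hx).deriv
  rw [hdd, hd1, hα x, hφdef]
  have hpc : Real.sin (c * x + c₁) ^ 2 = 1 - Real.cos (c * x + c₁) ^ 2 := by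
    have := Real.sin_sq_add_cos_sq (c * x + c₁)
    linarith
  field_simp
  linear_combination (4 * c ^ 3 * Real.sin (c * x + c₁)) * hpc
end

section
/- Let c, K₁ be real numbers and let U = {x ∈ ℝ : cos(c·x + c·K₁) ≠ 0}. Then the function α : U → ℝ defined by α(x) = −(c/2)·tan(c·x + c·K₁) satisfies the Codazzi-like equation α''(x) + 6·α(x)·α'(x) + 4·α(x)³ + c²·α(x) = 0 at every point x ∈ U. -/
/-- The special function `α(x) = −(c/2)·tan(c·x + c·K₁)` satisfies the Codazzi-like
equation `α'' + 6·α·α' + 4·α³ + c²·α = 0` at every point of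
`U = {x | cos(c·x + c·K₁) ≠ 0}`. -/
theorem codazzi_special_solution_tan (c K₁ : ℝ) (α : ℝ → ℝ)
    (hα : ∀ x : ℝ, α x = -(c / 2) * Real.tan (c * x + c * K₁)) :
    ∀ x : ℝ, Real.cos (c * x + c * K₁) ≠ 0 →
      deriv (deriv α) x + 6 * α x * deriv α x + 4 * (α x) ^ 3 + c ^ 2 * α x = 0 := by
  intro x hx
  have hu : ∀ y : ℝ, HasDerivAt (fun z : ℝ => c * z + c * K₁) c y := by
    intro y
    simpa using ((hasDerivAt_id y).const_mul c).add_const (c * K₁)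
  have hU : IsOpen {y : ℝ | Real.cos (c * y + c * K₁) ≠ 0} := by
    have hcont : Continuous fun y : ℝ => Real.cos (c * y + c * K₁) := by continuity
    exact isOpen_ne.preimage hcont
  -- derivative of α on U
  have hd : ∀ y : ℝ, Real.cos (c * y + c * K₁) ≠ 0 →
      HasDerivAt α (-(c ^ 2 / 2) * (1 + Real.tan (c * y + c * K₁) ^ 2)) y := by
    intro y hy
    have htan : HasDerivAt (fun z : ℝ => Real.tan (c * z + c * K₁))
        (1 / Real.cos (c * y + c * K₁) ^ 2 * c) y := by
      have := (Real.hasDerivAt_tan hy).comp y (hu y); exact this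
    have h1 : (1 : ℝ) + Real.tan (c * y + c * K₁) ^ 2
        = 1 / Real.cos (c * y + c * K₁) ^ 2 := by
      rw [one_div, ← Real.inv_one_add_tan_sq hy, inv_inv]
    have := htan.const_mul (-(c / 2))
    have hfun : α = fun z : ℝ => -(c / 2) * Real.tan (c * z + c * K₁) := funext hα
    rw [hfun]
    exact this.congr_deriv (by rw [h1]; ring)
  have hderiv : ∀ y : ℝ, Real.cos (c * y + c * K₁) ≠ 0 →
      deriv α y = -(c ^ 2 / 2) * (1 + Real.tan (c * y + c * K₁) ^ 2) :=
    fun y hy => (hd y hy).deriv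
  have hev : deriv α =ᶠ[nhds x]
      fun y => -(c ^ 2 / 2) * (1 + Real.tan (c * y + c * K₁) ^ 2) := by
    filter_upwards [hU.mem_nhds hx] with y hy using hderiv y hy
  have h2 : deriv (deriv α) x =
      deriv (fun y => -(c ^ 2 / 2) * (1 + Real.tan (c * y + c * K₁) ^ 2)) x :=
    hev.deriv_eq
  -- second derivative
  have htan : HasDerivAt (fun z : ℝ => Real.tan (c * z + c * K₁))
      ((1 + Real.tan (c * x + c * K₁) ^ 2) * c) x := by
    have h1 : (1 : ℝ) + Real.tan (c * x + c * K₁) ^ 2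
        = 1 / Real.cos (c * x + c * K₁) ^ 2 := by
      rw [one_div, ← Real.inv_one_add_tan_sq hx, inv_inv]
    have := (Real.hasDerivAt_tan hx).comp x (hu x)
    rwa [← h1] at this
  have hg : HasDerivAt (fun y => -(c ^ 2 / 2) * (1 + Real.tan (c * y + c * K₁) ^ 2))
      (-(c ^ 2 / 2) * (2 * Real.tan (c * x + c * K₁) *
        ((1 + Real.tan (c * x + c * K₁) ^ 2) * c))) x := by
    have hsq : HasDerivAt (fun z : ℝ => Real.tan (c * z + c * K₁) ^ 2)
        (2 * Real.tan (c * x + c * K₁) * ((1 + Real.tan (c * x + c * K₁) ^ 2) * c)) x := by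
      simpa [mul_comm, mul_assoc, mul_left_comm] using htan.fun_pow 2
    simpa using (hsq.const_add 1).const_mul (-(c ^ 2 / 2))
  rw [h2, hg.deriv, hα x, hderiv x hx]
  ring
end

section
/- Let c > 0, let I ⊆ ℝ be a nonempty open interval, and let α : I → ℝ be twice continuously differentiable and satisfy the Codazzi-like equation α''(x) + 6·α(x)·α'(x) + 4·α(x)³ + c²·α(x) = 0 for all x ∈ I. Then either α(x) = 0 for all x ∈ I, or there exist real constants c₁ and c₂ such that for all x ∈ I one has c₂ − cos(c·x + c₁) ≠ 0 and α(x) = (c/2)·sin(c·x + c₁)/(c₂ − cos(c·x + c₁)). -/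
open Real

private lemma const_of_hasDerivAt_zero {I : Set ℝ} (hI : Convex ℝ I) (hIopen : IsOpen I)
    {f : ℝ → ℝ} (hf : ∀ x ∈ I, HasDerivAt f 0 x) {x y : ℝ} (hx : x ∈ I) (hy : y ∈ I) :
    f x = f y := by
  refine hI.is_const_of_fderivWithin_eq_zero
    (fun z hz => ((hf z hz).differentiableAt).differentiableWithinAt) (fun z hz => ?_) hx hy
  rw [fderivWithin_of_isOpen hIopen hz, (hf z hz).hasFDerivAt.fderiv]
  ext t
  simp

private lemma osc_repr {c : ℝ} (hc : 0 < c) {I : Set ℝ} (hI : Convex ℝ I) (hIopen : IsOpen I)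
    {v e : ℝ → ℝ} (hv : ∀ x ∈ I, HasDerivAt v (e x) x)
    (he : ∀ x ∈ I, HasDerivAt e (-(c ^ 2) * v x) x)
    {x₀ : ℝ} (hx₀ : x₀ ∈ I) {x : ℝ} (hx : x ∈ I) :
    v x = v x₀ * Real.cos (c * (x - x₀)) + (e x₀ / c) * Real.sin (c * (x - x₀)) := by
  set A := v x₀ with hA
  set B := e x₀ / c with hB
  have hin : ∀ y : ℝ, HasDerivAt (fun y => c * (y - x₀)) c y := by
    intro y
    simpa using ((hasDerivAt_id y).sub_const x₀).const_mul c
  set s : ℝ → ℝ := fun y => A * Real.cos (c * (y - x₀)) + B * Real.sin (c * (y - x₀)) with hs_def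
  set s' : ℝ → ℝ := fun y =>
      -(c * A) * Real.sin (c * (y - x₀)) + c * B * Real.cos (c * (y - x₀)) with hs'_def
  have hs : ∀ y : ℝ, HasDerivAt s (s' y) y := by
    intro y
    have := (((hin y).cos.const_mul A)).add (((hin y).sin.const_mul B))
    refine this.congr_deriv ?_
    simp [hs'_def]; ring
  have hs' : ∀ y : ℝ, HasDerivAt s' (-(c ^ 2) * s y) y := by
    intro y
    have := (((hin y).sin.const_mul (-(c * A)))).add (((hin y).cos.const_mul (c * B)))
    refine this.congr_deriv ?_
    simp [hs_def]; ring
  set d : ℝ → ℝ := fun y => v y - s y with hd_def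
  set ee : ℝ → ℝ := fun y => e y - s' y with hee_def
  have hd : ∀ y ∈ I, HasDerivAt d (ee y) y := fun y hy => (hv y hy).sub (hs y)
  have hee : ∀ y ∈ I, HasDerivAt ee (-(c ^ 2) * d y) y := by
    intro y hy
    have := (he y hy).sub (hs' y)
    refine this.congr_deriv ?_
    simp [hd_def]; ring
  set E : ℝ → ℝ := fun y => c ^ 2 * d y ^ 2 + ee y ^ 2 with hE_def
  have hE : ∀ y ∈ I, HasDerivAt E 0 y := by
    intro y hy
    have := ((((hd y hy).pow 2).const_mul (c ^ 2))).add ((hee y hy).pow 2)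
    refine this.congr_deriv ?_
    all_goals push_cast; ring
  have hExx : E x = E x₀ := const_of_hasDerivAt_zero hI hIopen hE hx hx₀
  have hdx₀ : d x₀ = 0 := by simp [hd_def, hs_def, hA]
  have heex₀ : ee x₀ = 0 := by
    simp [hee_def, hs'_def, hB]
    field_simp
    ring
  have hEx₀ : E x₀ = 0 := by simp [hE_def, hdx₀, heex₀]
  have hdx : d x = 0 := by
    have h1 : c ^ 2 * d x ^ 2 + ee x ^ 2 = 0 := by
      have := hExx.trans hEx₀
      simpa [hE_def] using this
    have h2 : (c * d x) ^ 2 = 0 := by nlinarith [sq_nonneg (ee x)]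
    have h3 : c * d x = 0 := by
      exact pow_eq_zero_iff (by norm_num) |>.mp h2
    rcases mul_eq_zero.mp h3 with h | h
    · exact absurd h hc.ne'
    · exact h
  have : v x = s x := by
    have := hdx
    simp [hd_def] at this
    linarith [this]
  simpa [hs_def] using this

/-- Classification of solutions of the Codazzi-like equation with parameter `c > 0`
on a nonempty open interval: either `α ≡ 0`, or `α` has the general form
`(c/2)·sin(c·x + c₁)/(c₂ − cos(c·x + c₁))` with nonvanishing denominator. -/
theorem codazzi_classification (c : ℝ) (hc : 0 < c) (I : Set ℝ)
    (hIopen : IsOpen I) (hIconn : IsPreconnected I) (hIne : I.Nonempty)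
    (α : ℝ → ℝ) (hα : ContDiffOn ℝ 2 α I)
    (hode : ∀ x ∈ I,
      deriv (deriv α) x + 6 * α x * deriv α x + 4 * (α x) ^ 3 + c ^ 2 * α x = 0) :
    (∀ x ∈ I, α x = 0) ∨
      ∃ c₁ c₂ : ℝ, ∀ x ∈ I, c₂ - Real.cos (c * x + c₁) ≠ 0 ∧
        α x = (c / 2) * Real.sin (c * x + c₁) / (c₂ - Real.cos (c * x + c₁)) := by
  obtain ⟨x₀, hx₀⟩ := hIne
  have hconv : Convex ℝ I := convex_iff_ordConnected.mpr hIconn.ordConnected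
  have hαc : ContinuousOn α I := hα.continuousOn
  have hα1 : ∀ x ∈ I, HasDerivAt α (deriv α x) x := by
    intro x hx
    exact ((hα.differentiableOn (by norm_num)).differentiableAt
      (hIopen.mem_nhds hx)).hasDerivAt
  have hαd : ContDiffOn ℝ 1 (deriv α) I := hα.deriv_of_isOpen hIopen (by norm_num)
  have hα2 : ∀ x ∈ I, HasDerivAt (deriv α) (deriv (deriv α) x) x := by
    intro x hx
    exact ((hαd.differentiableOn (by norm_num)).differentiableAt
      (hIopen.mem_nhds hx)).hasDerivAt
  -- the positive function w = exp (2 ∫ α)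
  set F : ℝ → ℝ := fun x => ∫ t in x₀..x, α t with hF_def
  have hF : ∀ x ∈ I, HasDerivAt F (α x) x := by
    intro x hx
    have hsub : Set.uIcc x₀ x ⊆ I := hconv.ordConnected.uIcc_subset hx₀ hx
    exact intervalIntegral.integral_hasDerivAt_right
      ((hαc.mono hsub).intervalIntegrable)
      (hαc.stronglyMeasurableAtFilter hIopen x hx)
      (hαc.continuousAt (hIopen.mem_nhds hx))
  set w : ℝ → ℝ := fun x => Real.exp (2 * F x) with hw_def
  have hwpos : ∀ x, 0 < w x := fun x => Real.exp_pos _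
  have hw : ∀ x ∈ I, HasDerivAt w (2 * α x * w x) x := by
    intro x hx
    have := ((hF x hx).const_mul 2).exp
    convert this using 1
    ring
  set v : ℝ → ℝ := fun x => 2 * α x * w x with hv_def
  set e : ℝ → ℝ := fun x => (2 * deriv α x + 4 * α x ^ 2) * w x with he_def
  have hv : ∀ x ∈ I, HasDerivAt v (e x) x := by
    intro x hx
    have := (((hα1 x hx).const_mul 2)).mul (hw x hx)
    refine this.congr_deriv ?_
    simp [he_def]; ring
  have he : ∀ x ∈ I, HasDerivAt e (-(c ^ 2) * v x) x := by
    intro x hx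
    have h1 : HasDerivAt (fun y => 2 * deriv α y + 4 * α y ^ 2)
        (2 * deriv (deriv α) x + 4 * (2 * α x ^ 1 * deriv α x)) x := by
      have := (((hα2 x hx).const_mul 2)).add ((((hα1 x hx)).pow 2).const_mul 4)
      refine this.congr_deriv ?_
      all_goals push_cast; ring
    have := h1.mul (hw x hx)
    refine this.congr_deriv ?_
    have hod := hode x hx
    simp only [hv_def]
    linear_combination (2 * w x) * hod
  set A : ℝ := v x₀ with hA
  set B : ℝ := e x₀ / c with hB
  have hrep : ∀ x ∈ I, v x = A * Real.cos (c * (x - x₀)) + B * Real.sin (c * (x - x₀)) :=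
    fun x hx => osc_repr hc hconv hIopen hv he hx₀ hx
  by_cases hAB : A = 0 ∧ B = 0
  · left
    intro x hx
    have h0 : v x = 0 := by rw [hrep x hx, hAB.1, hAB.2]; ring
    have := hwpos x
    have : 2 * α x * w x = 0 := h0
    rcases mul_eq_zero.mp this with h | h
    · rcases mul_eq_zero.mp h with h | h
      · norm_num at h
      · exact h
    · exact absurd h (hwpos x).ne'
  · right
    have hABpos : 0 < A ^ 2 + B ^ 2 := by
      rcases not_and_or.mp hAB with h | h
      · positivity
      · positivity
    set P : ℝ := A * Real.cos (c * x₀) - B * Real.sin (c * x₀) with hP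
    set Q : ℝ := A * Real.sin (c * x₀) + B * Real.cos (c * x₀) with hQ
    have hPQ : P ^ 2 + Q ^ 2 = A ^ 2 + B ^ 2 := by
      have := Real.sin_sq_add_cos_sq (c * x₀)
      simp [hP, hQ]
      nlinarith [this]
    set R : ℝ := Real.sqrt (A ^ 2 + B ^ 2) with hR
    have hRpos : 0 < R := Real.sqrt_pos.mpr hABpos
    have hRsq : R ^ 2 = A ^ 2 + B ^ 2 := Real.sq_sqrt hABpos.le
    set z : ℂ := ⟨Q, P⟩ with hz_def
    have hz : z ≠ 0 := by
      intro h
      have hQ0 : Q = 0 := congrArg Complex.re h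
      have hP0 : P = 0 := congrArg Complex.im h
      rw [hQ0, hP0] at hPQ
      nlinarith
    have habs : ‖z‖ = R := by
      rw [Complex.norm_def, Complex.normSq_mk, hR]
      congr 1
      nlinarith [hPQ]
    set c₁ : ℝ := Complex.arg z with hc₁
    have hcos : Q = R * Real.cos c₁ := by
      rw [hc₁, Complex.cos_arg hz, habs]
      field_simp [hz_def]
      rfl
    have hsin : P = R * Real.sin c₁ := by
      rw [hc₁, Complex.sin_arg, habs]
      field_simp [hz_def]
      rfl
    have key : ∀ x ∈ I, v x = R * Real.sin (c * x + c₁) := by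
      intro x hx
      rw [hrep x hx]
      rw [show c * (x - x₀) = c * x - c * x₀ by ring, Real.cos_sub, Real.sin_sub,
        Real.sin_add]
      have h1 : A * Real.sin (c * x₀) + B * Real.cos (c * x₀) = R * Real.cos c₁ := by
        rw [← hQ]; exact hcos
      have h2 : A * Real.cos (c * x₀) - B * Real.sin (c * x₀) = R * Real.sin c₁ := by
        rw [← hP]; exact hsin
      linear_combination Real.sin (c * x) * h1 + Real.cos (c * x) * h2
    set W : ℝ → ℝ := fun x => w x + (R / c) * Real.cos (c * x + c₁) with hW_def
    have hin : ∀ y : ℝ, HasDerivAt (fun y : ℝ => c * y + c₁) c y := by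
      intro y
      simpa using ((hasDerivAt_id y).const_mul c).add_const c₁
    have hW : ∀ x ∈ I, HasDerivAt W 0 x := by
      intro x hx
      have hk : 2 * α x * w x = R * Real.sin (c * x + c₁) := key x hx
      have h0 : 2 * α x * w x + R / c * (-Real.sin (c * x + c₁) * c) = 0 := by
        rw [hk]
        field_simp
        ring
      have := (hw x hx).add (((hin x).cos).const_mul (R / c))
      refine this.congr_deriv ?_
      linarith [h0]
    set D : ℝ := W x₀ with hD
    have hwval : ∀ x ∈ I, w x = D - (R / c) * Real.cos (c * x + c₁) := by
      intro x hx
      have := const_of_hasDerivAt_zero hconv hIopen hW hx hx₀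
      simp only [hW_def] at this
      rw [hD]
      linarith [this]
    refine ⟨c₁, D * c / R, fun x hx => ?_⟩
    have hden : D * c / R - Real.cos (c * x + c₁) = (c / R) * w x := by
      rw [hwval x hx]
      field_simp
    have hwx : (0 : ℝ) < w x := hwpos x
    constructor
    · rw [hden]
      positivity
    · have hvx : 2 * α x * w x = R * Real.sin (c * x + c₁) := key x hx
      rw [hden]
      rw [eq_div_iff (by positivity)]
      field_simp
      linear_combination hvx
end

section
/- Let c ∈ ℝ, let I ⊆ ℝ be a nonempty open interval, and let x : I → ℝ be three times continuously differentiable with x(s) > 0 for all s ∈ I. Suppose that α := x'/x satisfies the Codazzi-like equation α''(s) + 6·α(s)·α'(s) + 4·α(s)³ + c²·α(s) = 0 for all s ∈ I. Then there exists a real constant k such that (x²)''(s) + c²·x(s)² = k for all s ∈ I. -/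
/-- If `x > 0` is `C³` on a nonempty open interval and `α = x'/x` satisfies the
Codazzi-like equation, then `(x²)'' + c²·x²` is constant on the interval. -/
theorem codazzi_first_integral (c : ℝ) (I : Set ℝ)
    (hIopen : IsOpen I) (hIconn : IsPreconnected I) (hIne : I.Nonempty)
    (x : ℝ → ℝ) (hx : ContDiffOn ℝ 3 x I) (hxpos : ∀ s ∈ I, 0 < x s)
    (α : ℝ → ℝ) (hα : ∀ s : ℝ, α s = deriv x s / x s)
    (hode : ∀ s ∈ I,
      deriv (deriv α) s + 6 * α s * deriv α s + 4 * (α s) ^ 3 + c ^ 2 * α s = 0) :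
    ∃ k : ℝ, ∀ s ∈ I,
      deriv (deriv (fun σ => (x σ) ^ 2)) s + c ^ 2 * (x s) ^ 2 = k := by
  have hαfun : α = fun t => deriv x t / x t := funext hα
  have hx1 : ContDiffOn ℝ 2 (deriv x) I := hx.deriv_of_isOpen hIopen (by norm_num)
  have hx2 : ContDiffOn ℝ 1 (deriv (deriv x)) I := hx1.deriv_of_isOpen hIopen (by norm_num)
  have hmem : ∀ s ∈ I, I ∈ nhds s := fun s hs => hIopen.mem_nhds hs
  have hd0 : ∀ s ∈ I, HasDerivAt x (deriv x s) s := fun s hs =>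
    ((hx.differentiableOn (by norm_num)).differentiableAt (hmem s hs)).hasDerivAt
  have hd1 : ∀ s ∈ I, HasDerivAt (deriv x) (deriv (deriv x) s) s := fun s hs =>
    ((hx1.differentiableOn (by norm_num)).differentiableAt (hmem s hs)).hasDerivAt
  have hd2 : ∀ s ∈ I, HasDerivAt (deriv (deriv x)) (deriv (deriv (deriv x)) s) s := fun s hs =>
    ((hx2.differentiableOn (by norm_num)).differentiableAt (hmem s hs)).hasDerivAt
  set F : ℝ → ℝ := fun t => deriv (deriv (fun σ => (x σ) ^ 2)) t + c ^ 2 * (x t) ^ 2 with hF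
  -- first derivative of α on I
  have hA1 : ∀ s ∈ I, HasDerivAt α
      ((deriv (deriv x) s * x s - deriv x s * deriv x s) / x s ^ 2) s := fun s hs => by
    rw [hαfun]
    exact (hd1 s hs).div (hd0 s hs) (hxpos s hs).ne'
  have hderivα : ∀ s ∈ I, deriv α s =
      (deriv (deriv x) s * x s - deriv x s * deriv x s) / x s ^ 2 := fun s hs => (hA1 s hs).deriv
  -- second derivative of x^2 on I
  have hg1 : ∀ s ∈ I, deriv (fun σ => (x σ) ^ 2) s = 2 * (x s * deriv x s) := fun s hs => by
    have := ((hd0 s hs).mul (hd0 s hs)).const_mul 1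
    have h2 : HasDerivAt (fun σ => (x σ) ^ 2) (deriv x s * x s + x s * deriv x s) s := by
      exact ((hd0 s hs).mul (hd0 s hs)).congr_of_eventuallyEq
        (Filter.Eventually.of_forall fun σ => pow_two (x σ))
    rw [h2.deriv]; ring
  have hg2 : ∀ s ∈ I, deriv (deriv (fun σ => (x σ) ^ 2)) s =
      2 * (deriv x s * deriv x s + x s * deriv (deriv x) s) := fun s hs => by
    have hev : deriv (fun σ => (x σ) ^ 2) =ᶠ[nhds s] fun t => 2 * (x t * deriv x t) :=
      Filter.eventuallyEq_of_mem (hmem s hs) (fun t ht => hg1 t ht)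
    have h2 : HasDerivAt (fun t => 2 * (x t * deriv x t))
        (2 * (deriv x s * deriv x s + x s * deriv (deriv x) s)) s :=
      ((hd0 s hs).mul (hd1 s hs)).const_mul 2
    rw [Filter.EventuallyEq.deriv_eq hev]
    exact h2.deriv
  -- F has zero derivative on I
  have key : ∀ s ∈ I, HasDerivAt F 0 s := by
    intro s hs
    have hxne : x s ≠ 0 := (hxpos s hs).ne'
    set x0 := x s with hx0
    set x1 := deriv x s with hx1'
    set x2 := deriv (deriv x) s with hx2'
    set x3 := deriv (deriv (deriv x)) s with hx3'
    -- second derivative of α at s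
    have hNs : HasDerivAt (fun t => deriv (deriv x) t * x t - deriv x t * deriv x t)
        (x3 * x0 + x2 * x1 - (x2 * x1 + x1 * x2)) s :=
      ((hd2 s hs).mul (hd0 s hs)).sub ((hd1 s hs).mul (hd1 s hs))
    have hDs : HasDerivAt (fun t => x t ^ 2) (2 * x0 ^ 1 * x1) s := by
      exact (((hd0 s hs).mul (hd0 s hs)).congr_of_eventuallyEq
        (Filter.Eventually.of_forall fun σ => pow_two (x σ))).congr_deriv (by rw [hx0, hx1']; ring)
    have hA1' : HasDerivAt (fun t => (deriv (deriv x) t * x t - deriv x t * deriv x t) / x t ^ 2)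
        (((x3 * x0 + x2 * x1 - (x2 * x1 + x1 * x2)) * x0 ^ 2
          - (x2 * x0 - x1 * x1) * (2 * x0 ^ 1 * x1)) / (x0 ^ 2) ^ 2) s :=
      hNs.div hDs (pow_ne_zero 2 hxne)
    have hev : deriv α =ᶠ[nhds s]
        fun t => (deriv (deriv x) t * x t - deriv x t * deriv x t) / x t ^ 2 :=
      Filter.eventuallyEq_of_mem (hmem s hs) (fun t ht => hderivα t ht)
    have hA2 : deriv (deriv α) s =
        ((x3 * x0 + x2 * x1 - (x2 * x1 + x1 * x2)) * x0 ^ 2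
          - (x2 * x0 - x1 * x1) * (2 * x0 ^ 1 * x1)) / (x0 ^ 2) ^ 2 :=
      (hA1'.congr_of_eventuallyEq hev).deriv
    -- the ODE at s becomes a polynomial identity
    have hE := hode s hs
    rw [hA2, hderivα s hs, hα s] at hE
    have hpoly : x0 * x3 + 3 * x1 * x2 + c ^ 2 * x0 * x1 = 0 := by
      field_simp at hE
      have h9 : x0 ^ 9 * (x0 * x3 + 3 * x1 * x2 + c ^ 2 * x0 * x1) = 0 := by
        rw [← hx0, ← hx1', ← hx2'] at hE
        field_simp at hE
        linear_combination x0 ^ 8 * hE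
      rcases mul_eq_zero.1 h9 with h | h
      · exact absurd h (pow_ne_zero 9 hxne)
      · exact h
    -- F eventually equals G near s
    have hevF : F =ᶠ[nhds s] fun t =>
        2 * (deriv x t * deriv x t + x t * deriv (deriv x) t) + c ^ 2 * x t ^ 2 :=
      Filter.eventuallyEq_of_mem (hmem s hs) (fun t ht => by
        simp only [hF]; rw [hg2 t ht])
    have hG : HasDerivAt (fun t =>
        2 * (deriv x t * deriv x t + x t * deriv (deriv x) t) + c ^ 2 * x t ^ 2)
        (2 * ((x2 * x1 + x1 * x2) + (x1 * x2 + x0 * x3)) + c ^ 2 * (2 * x0 ^ 1 * x1)) s :=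
      (((hd1 s hs).mul (hd1 s hs)).add ((hd0 s hs).mul (hd2 s hs))).const_mul 2 |>.add
        (((hd0 s hs).pow 2).const_mul (c ^ 2))
    have hval : 2 * ((x2 * x1 + x1 * x2) + (x1 * x2 + x0 * x3)) + c ^ 2 * (2 * x0 ^ 1 * x1) = 0 := by
      nlinarith [hpoly]
    rw [← hval]
    exact hG.congr_of_eventuallyEq hevF
  -- conclude constancy
  obtain ⟨s0, hs0⟩ := hIne
  refine ⟨F s0, fun s hs => ?_⟩
  have hconv : Convex ℝ I := convex_iff_ordConnected.mpr hIconn.ordConnected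
  exact hconv.is_const_of_fderivWithin_eq_zero
    (fun t ht => (key t ht).differentiableAt.differentiableWithinAt)
    (fun t ht => by
      rw [fderivWithin_of_isOpen hIopen ht, (key t ht).hasFDerivAt.fderiv]
      ext
      simp) hs hs0
end

section
/- Let c ∈ ℝ, let I ⊆ ℝ be a nonempty open interval, and let x, t : I → ℝ be twice continuously differentiable with x(s) > 0 and x'(s)² + t'(s)² = 1 for all s ∈ I. Suppose that for all s ∈ I the constant p-mean curvature equation holds: x(s)³·(x'(s)·t''(s) − x''(s)·t'(s)) + t'(s)³ = −c · x(s) · (x(s)²·x'(s)² + t'(s)²)^{3/2}. Then the energy function E(s) = x(s)·t'(s)/√(x(s)²·x'(s)² + t'(s)²) + (c/2)·x(s)² is constant on I. -/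
/-- For the generating curve `(x, t)` (Euclidean arc-length, `x > 0`) of a
rotationally invariant surface of constant p-mean curvature `c` in the Heisenberg
group, the Ritoré–Rosales energy
`E(s) = x·t'/√(x²·x'² + t'²) + (c/2)·x²` is constant. -/
theorem energy_constant (c : ℝ) (I : Set ℝ)
    (hIopen : IsOpen I) (hIconn : IsPreconnected I) (hIne : I.Nonempty)
    (x t : ℝ → ℝ) (hx : ContDiffOn ℝ 2 x I) (ht : ContDiffOn ℝ 2 t I)
    (hxpos : ∀ s ∈ I, 0 < x s)
    (harc : ∀ s ∈ I, (deriv x s) ^ 2 + (deriv t s) ^ 2 = 1)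
    (hH : ∀ s ∈ I,
      (x s) ^ 3 * (deriv x s * deriv (deriv t) s - deriv (deriv x) s * deriv t s)
          + (deriv t s) ^ 3
        = -c * x s * ((x s) ^ 2 * (deriv x s) ^ 2 + (deriv t s) ^ 2) ^ ((3 : ℝ) / 2)) :
    ∃ E : ℝ, ∀ s ∈ I,
      x s * deriv t s / Real.sqrt ((x s) ^ 2 * (deriv x s) ^ 2 + (deriv t s) ^ 2)
        + (c / 2) * (x s) ^ 2 = E := by
  set F : ℝ → ℝ := fun s =>
    x s * deriv t s / Real.sqrt ((x s) ^ 2 * (deriv x s) ^ 2 + (deriv t s) ^ 2)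
      + (c / 2) * (x s) ^ 2 with hF
  have hx1 : ContDiffOn ℝ 1 (deriv x) I := hx.deriv_of_isOpen hIopen (by norm_num)
  have ht1 : ContDiffOn ℝ 1 (deriv t) I := ht.deriv_of_isOpen hIopen (by norm_num)
  have key : ∀ s ∈ I, HasDerivAt F 0 s := by
    intro s hs
    have hxd : HasDerivAt x (deriv x s) s :=
      ((hx.differentiableOn (by norm_num) s hs).differentiableAt
        (hIopen.mem_nhds hs)).hasDerivAt
    have htd : HasDerivAt t (deriv t s) s :=
      ((ht.differentiableOn (by norm_num) s hs).differentiableAt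
        (hIopen.mem_nhds hs)).hasDerivAt
    have hxd2 : HasDerivAt (deriv x) (deriv (deriv x) s) s :=
      ((hx1.differentiableOn (by norm_num) s hs).differentiableAt
        (hIopen.mem_nhds hs)).hasDerivAt
    have htd2 : HasDerivAt (deriv t) (deriv (deriv t) s) s :=
      ((ht1.differentiableOn (by norm_num) s hs).differentiableAt
        (hIopen.mem_nhds hs)).hasDerivAt
    have harcs := harc s hs
    have hHs := hH s hs
    have hxp := hxpos s hs
    set X := x s with hXdef
    set X' := deriv x s with hX'def
    set X'' := deriv (deriv x) s with hX''def
    set T' := deriv t s with hT'def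
    set T'' := deriv (deriv t) s with hT''def
    set Q := X ^ 2 * X' ^ 2 + T' ^ 2 with hQdef
    have hQpos : 0 < Q := by
      rcases eq_or_ne X' 0 with h | h
      · have hT : T' ^ 2 = 1 := by rw [h] at harcs; simpa using harcs
        simp [hQdef, h, hT]
      · have h2 : 0 < X ^ 2 * X' ^ 2 :=
          mul_pos (pow_pos hxp 2) (pow_two_pos_of_ne_zero h)
        nlinarith [sq_nonneg T']
    set r := Real.sqrt Q with hrdef
    have hrpos : 0 < r := Real.sqrt_pos.2 hQpos
    have hr2 : r ^ 2 = X ^ 2 * X' ^ 2 + T' ^ 2 := (Real.sq_sqrt hQpos.le).trans hQdef.symm.symm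
    have hQd : HasDerivAt (fun s => (x s) ^ 2 * (deriv x s) ^ 2 + (deriv t s) ^ 2)
        (2 * X * X' * X' ^ 2 + X ^ 2 * (2 * X' * X'') + 2 * T' * T'') s := by
      have h1 := ((hxd.pow 2).mul (hxd2.pow 2)).add (htd2.pow 2)
      convert h1 using 1
      · rfl
      · rfl
      · rfl
      · simp only [Pi.pow_apply, hXdef, hX'def, hT'def]
        ring
    have hrd : HasDerivAt (fun s => Real.sqrt ((x s) ^ 2 * (deriv x s) ^ 2 + (deriv t s) ^ 2))
        ((2 * X * X' * X' ^ 2 + X ^ 2 * (2 * X' * X'') + 2 * T' * T'') / (2 * r)) s :=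
      hQd.sqrt hQpos.ne'
    have hnumd : HasDerivAt (fun s => x s * deriv t s) (X' * T' + X * T'') s := hxd.mul htd2
    have hdivd := hnumd.div hrd hrpos.ne'
    have hsqd : HasDerivAt (fun s => (c / 2) * (x s) ^ 2) (c / 2 * (2 * X * X')) s := by
      simpa using ((hxd.pow 2).const_mul (c / 2))
    have hFd := hdivd.add hsqd
    have hQ32 : Q ^ ((3 : ℝ) / 2) = r ^ 3 := by
      rw [hrdef, Real.sqrt_eq_rpow, ← Real.rpow_natCast (Q ^ ((1:ℝ)/2)) 3,
        ← Real.rpow_mul hQpos.le]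
      norm_num
    rw [hQ32] at hHs
    have hzero : ((X' * T' + X * T'') * r -
        X * T' * ((2 * X * X' * X' ^ 2 + X ^ 2 * (2 * X' * X'') + 2 * T' * T'') / (2 * r))) /
          r ^ 2 + c / 2 * (2 * X * X') = 0 := by
      have h2r : (2 * r) ≠ 0 := by positivity
      have hr0 : r ≠ 0 := hrpos.ne'
      field_simp
      linear_combination X' * hHs + (X' * T' + X * T'') * hr2
    rw [← hzero]
    convert hFd using 2
    all_goals rfl
  obtain ⟨s₀, hs₀⟩ := hIne
  refine ⟨F s₀, fun s hs => ?_⟩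
  have hconv : Convex ℝ I := hIconn.convex
  have hdiff : DifferentiableOn ℝ F I := fun s hs =>
    ((key s hs).differentiableAt).differentiableWithinAt
  have hfd : ∀ s ∈ I, fderivWithin ℝ F I s = 0 := by
    intro s hs
    have h := ((key s hs).hasFDerivAt.hasFDerivWithinAt (s := I)).fderivWithin
      (hIopen.uniqueDiffOn s hs)
    rw [h]
    ext
    simp
  exact hconv.is_const_of_fderivWithin_eq_zero hdiff hfd hs hs₀
end

section
/- Let λ, E ∈ ℝ, let I ⊆ ℝ be a nonempty open interval, and let x, t : I → ℝ with x twice continuously differentiable and t continuously differentiable, such that for all s ∈ I: x(s) > 0, x'(s)² + t'(s)²/x(s)² = 1, and t'(s) = E − λ·x(s)². Then at every s ∈ I with x'(s) ≠ 0 one has (x²)''(s) + 4λ²·x(s)² = 2 + 4λE; that is, with c = 2λ and u = x², the constant in u'' + c²·u = k equals k = 2cE + 2. -/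
/-- In horizontal arc-length parametrization (`x'² + t'²/x² = 1`) with constant
Ritoré–Rosales energy (`t' = E − λ·x²`), the function `u = x²` satisfies
`u'' + 4λ²·u = 2 + 4λE`, i.e. `u'' + c²·u = k` with `c = 2λ` and `k = 2cE + 2`. -/
theorem relation_k_energy (lam E : ℝ) (I : Set ℝ)
    (hIopen : IsOpen I) (hIconn : IsPreconnected I) (hIne : I.Nonempty)
    (x t : ℝ → ℝ) (hx : ContDiffOn ℝ 2 x I) (ht : ContDiffOn ℝ 1 t I)
    (hxpos : ∀ s ∈ I, 0 < x s)
    (hunit : ∀ s ∈ I, (deriv x s) ^ 2 + (deriv t s) ^ 2 / (x s) ^ 2 = 1)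
    (henergy : ∀ s ∈ I, deriv t s = E - lam * (x s) ^ 2) :
    ∀ s ∈ I, deriv x s ≠ 0 →
      deriv (deriv (fun σ => (x σ) ^ 2)) s + 4 * lam ^ 2 * (x s) ^ 2
        = 2 + 4 * lam * E := by
  intro s hs hxs
  have hmem : I ∈ nhds s := hIopen.mem_nhds hs
  have hxd : ∀ σ ∈ I, DifferentiableAt ℝ x σ := fun σ hσ =>
    (hx.contDiffAt (hIopen.mem_nhds hσ)).differentiableAt (by norm_num)
  have hx1 : ContDiffOn ℝ 1 (deriv x) I := hx.deriv_of_isOpen hIopen (by norm_num)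
  have hx'd : DifferentiableAt ℝ (deriv x) s :=
    (hx1.contDiffAt hmem).differentiableAt one_ne_zero
  set u : ℝ → ℝ := fun σ => x σ ^ 2 with hu
  have hud : ∀ σ ∈ I, HasDerivAt u (2 * x σ * deriv x σ) σ := by
    intro σ hσ
    simpa [mul_comm, mul_assoc, mul_left_comm] using ((hxd σ hσ).hasDerivAt.fun_pow 2)
  have hud' : ∀ σ ∈ I, deriv u σ = 2 * x σ * deriv x σ := fun σ hσ => (hud σ hσ).deriv
  have key : ∀ σ ∈ I, deriv u σ ^ 2 = 4 * u σ - 4 * (E - lam * u σ) ^ 2 := by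
    intro σ hσ
    have hx0 : x σ ≠ 0 := (hxpos σ hσ).ne'
    have h1 := hunit σ hσ
    rw [henergy σ hσ] at h1
    rw [hud' σ hσ]
    have hx2 : (x σ) ^ 2 ≠ 0 := pow_ne_zero _ hx0
    field_simp at h1
    simp only [hu]
    nlinarith [h1]
  have heq : (fun σ => deriv u σ ^ 2) =ᶠ[nhds s]
      (fun σ => 4 * u σ - 4 * (E - lam * u σ) ^ 2) :=
    Filter.eventuallyEq_of_mem hmem key
  have hderiv_eq := heq.deriv_eq
  -- differentiability of deriv u at s
  have heq2 : deriv u =ᶠ[nhds s] fun σ => 2 * x σ * deriv x σ :=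
    Filter.eventuallyEq_of_mem hmem hud'
  have hu'd : DifferentiableAt ℝ (deriv u) s := by
    have h2 : DifferentiableAt ℝ (fun σ => 2 * x σ * deriv x σ) s :=
      ((differentiableAt_const _).mul (hxd s hs)).mul hx'd
    exact h2.congr_of_eventuallyEq heq2
  -- LHS derivative
  have hL : deriv (fun σ => deriv u σ ^ 2) s = 2 * deriv u s * deriv (deriv u) s := by
    have := (hu'd.hasDerivAt.fun_pow 2).deriv
    simpa [mul_comm, mul_assoc, mul_left_comm] using this
  -- RHS derivative
  set U' : ℝ := 2 * x s * deriv x s with hU'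
  have hU : HasDerivAt u U' s := hud s hs
  have h1 : HasDerivAt (fun σ => 4 * u σ) (4 * U') s := hU.const_mul 4
  have h2 : HasDerivAt (fun σ => E - lam * u σ) (-(lam * U')) s :=
    (hU.const_mul lam).const_sub E
  have h3 : HasDerivAt (fun σ => (E - lam * u σ) ^ 2)
      (2 * (E - lam * u s) ^ 1 * (-(lam * U'))) s := h2.pow 2
  have h4 : HasDerivAt (fun σ => 4 * (E - lam * u σ) ^ 2)
      (4 * (2 * (E - lam * u s) ^ 1 * (-(lam * U')))) s := h3.const_mul 4
  have hR : deriv (fun σ => 4 * u σ - 4 * (E - lam * u σ) ^ 2) s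
      = 4 * U' - 4 * (2 * (E - lam * u s) ^ 1 * (-(lam * U'))) := (h1.sub h4).deriv
  rw [hL, hR, hud' s hs, ← hU'] at hderiv_eq
  have hU'ne : U' ≠ 0 := by
    have := (hxpos s hs).ne'
    simp [hU']
    exact ⟨this, hxs⟩
  have hc : (2 * deriv (deriv u) s) * U'
      = (4 + 8 * lam * (E - lam * u s)) * U' := by linear_combination hderiv_eq
  have hfin := mul_right_cancel₀ hU'ne hc
  have hus : u s = x s ^ 2 := rfl
  rw [hus] at hfin
  show deriv (deriv u) s + 4 * lam ^ 2 * x s ^ 2 = 2 + 4 * lam * E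
  linear_combination hfin / 2
end

section
/- Let c > 0, c₁ ∈ ℝ, c₂ > 1, h ∈ ℝ, K ∈ ℝ. For x ∈ ℝ set D(x) = c₂ − cos(c·x + c₁), α(x) = (c/2)·sin(c·x + c₁)/D(x), a(x) = (−c/2 + ((c/2)·c₂ + h)/D(x)) / √(1 + α(x)²), and b(x) = (exp(K)/D(x)) / √(1 + α(x)²). Then for all x ∈ ℝ: (i) −a'(x) + a(x)·b'(x)/b(x) = c·α(x)/√(1 + α(x)²), and (ii) −b'(x)/b(x) = 2·α(x) + α(x)·α'(x)/(1 + α(x)²). -/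
/-- The normalized data `α`, `a`, `b` of a constant p-mean curvature surface of
general type with `c₂ > 1` satisfy the first two integrability conditions
`−a' + a·b'/b = c·α/√(1 + α²)` and `−b'/b = 2α + α·α'/(1 + α²)`. -/
theorem integrability_conditions (c c₁ c₂ h K : ℝ) (hc : 0 < c) (hc₂ : 1 < c₂)
    (D α a b : ℝ → ℝ)
    (hD : ∀ x : ℝ, D x = c₂ - Real.cos (c * x + c₁))
    (hα : ∀ x : ℝ, α x = (c / 2) * Real.sin (c * x + c₁) / D x)
    (ha : ∀ x : ℝ, a x = (-(c / 2) + ((c / 2) * c₂ + h) / D x) / Real.sqrt (1 + (α x) ^ 2))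
    (hb : ∀ x : ℝ, b x = (Real.exp K / D x) / Real.sqrt (1 + (α x) ^ 2)) :
    ∀ x : ℝ,
      (-deriv a x + a x * deriv b x / b x = c * α x / Real.sqrt (1 + (α x) ^ 2)) ∧
      (-(deriv b x / b x) = 2 * α x + α x * deriv α x / (1 + (α x) ^ 2)) := by
  have hDfun : D = fun x => c₂ - Real.cos (c * x + c₁) := funext hD
  subst hDfun
  have hαfun : α = fun x => (c / 2) * Real.sin (c * x + c₁) / (c₂ - Real.cos (c * x + c₁)) := by
    funext x; rw [hα]
  subst hαfun
  have hafun : a = fun x => (-(c / 2) + ((c / 2) * c₂ + h) / (c₂ - Real.cos (c * x + c₁))) /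
      Real.sqrt (1 + ((c / 2) * Real.sin (c * x + c₁) / (c₂ - Real.cos (c * x + c₁))) ^ 2) := by
    funext x; rw [ha]
  subst hafun
  have hbfun : b = fun x => (Real.exp K / (c₂ - Real.cos (c * x + c₁))) /
      Real.sqrt (1 + ((c / 2) * Real.sin (c * x + c₁) / (c₂ - Real.cos (c * x + c₁))) ^ 2) := by
    funext x; rw [hb]
  subst hbfun
  intro x
  set θ := c * x + c₁ with hθdef
  set s := Real.sin θ with hs
  set k := Real.cos θ with hk
  have hdpos : 0 < c₂ - k := by
    have := Real.cos_le_one θ; simp only [← hk] at this; linarith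
  have hd0 : c₂ - k ≠ 0 := ne_of_gt hdpos
  set d := c₂ - k with hdd
  set A : ℝ := (c / 2) * s / d with hA
  have hQpos : 0 < 1 + A ^ 2 := by positivity
  set S : ℝ := Real.sqrt (1 + A ^ 2) with hSdef
  have hSpos : 0 < S := Real.sqrt_pos.mpr hQpos
  have hS0 : S ≠ 0 := ne_of_gt hSpos
  have hS2 : S ^ 2 = 1 + A ^ 2 := Real.sq_sqrt (le_of_lt hQpos)
  -- derivative of θ
  have hθ : HasDerivAt (fun x : ℝ => c * x + c₁) c x := by
    simpa using ((hasDerivAt_id x).const_mul c).add_const c₁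
  have hsin : HasDerivAt (fun x : ℝ => Real.sin (c * x + c₁)) (k * c) x :=
    by have := (Real.hasDerivAt_sin θ).comp x hθ; exact this
  have hcos : HasDerivAt (fun x : ℝ => Real.cos (c * x + c₁)) (-s * c) x :=
    by have := (Real.hasDerivAt_cos θ).comp x hθ; exact this
  have hDx : HasDerivAt (fun x : ℝ => c₂ - Real.cos (c * x + c₁)) (s * c) x := by
    have := (hasDerivAt_const x c₂).sub hcos
    simp only [zero_sub, neg_mul, neg_neg] at this
    exact this
  set A' : ℝ := ((c / 2) * (k * c) * d - (c / 2) * s * (s * c)) / d ^ 2 with hA'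
  have hαx : HasDerivAt (fun x : ℝ =>
      (c / 2) * Real.sin (c * x + c₁) / (c₂ - Real.cos (c * x + c₁))) A' x := by
    have := (hsin.const_mul (c / 2)).div hDx hd0
    exact this
  have hQ : HasDerivAt (fun x : ℝ =>
      1 + ((c / 2) * Real.sin (c * x + c₁) / (c₂ - Real.cos (c * x + c₁))) ^ 2)
      (2 * A * A') x := by
    have := (hαx.pow 2).const_add 1
    have e : (2:ℝ) * A * A' = ((2:ℕ):ℝ) * A ^ 1 * A' := by push_cast; ring
    rw [e]; exact this
  have hS : HasDerivAt (fun x : ℝ =>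
      Real.sqrt (1 + ((c / 2) * Real.sin (c * x + c₁) / (c₂ - Real.cos (c * x + c₁))) ^ 2))
      (2 * A * A' / (2 * S)) x := hQ.sqrt (ne_of_gt hQpos)
  set m : ℝ := (c / 2) * c₂ + h with hm
  have hf : HasDerivAt (fun x : ℝ =>
      -(c / 2) + m / (c₂ - Real.cos (c * x + c₁)))
      ((0 * d - m * (s * c)) / d ^ 2) x :=
    ((hasDerivAt_const x m).div hDx hd0).const_add (-(c / 2))
  have hax : HasDerivAt (fun x : ℝ =>
      (-(c / 2) + m / (c₂ - Real.cos (c * x + c₁))) /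
      Real.sqrt (1 + ((c / 2) * Real.sin (c * x + c₁) / (c₂ - Real.cos (c * x + c₁))) ^ 2))
      (((0 * d - m * (s * c)) / d ^ 2 * S - (-(c / 2) + m / d) * (2 * A * A' / (2 * S))) / S ^ 2)
      x := hf.div hS hS0
  have hg : HasDerivAt (fun x : ℝ => Real.exp K / (c₂ - Real.cos (c * x + c₁)))
      ((0 * d - Real.exp K * (s * c)) / d ^ 2) x :=
    (hasDerivAt_const x (Real.exp K)).div hDx hd0
  have hbx : HasDerivAt (fun x : ℝ =>
      (Real.exp K / (c₂ - Real.cos (c * x + c₁))) /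
      Real.sqrt (1 + ((c / 2) * Real.sin (c * x + c₁) / (c₂ - Real.cos (c * x + c₁))) ^ 2))
      (((0 * d - Real.exp K * (s * c)) / d ^ 2 * S - (Real.exp K / d) * (2 * A * A' / (2 * S)))
        / S ^ 2) x := hg.div hS hS0
  have hE0 : Real.exp K ≠ 0 := Real.exp_ne_zero K
  rw [hαx.deriv]
  rw [hax.deriv, hbx.deriv]
  have hsc : s * c = 2 * A * d := by rw [hA]; field_simp
  constructor
  · simp only [← hθdef, ← hk, ← hs, ← hdd]
    field_simp
    ring
  · show -(((0 * d - Real.exp K * (s * c)) / d ^ 2 * S -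
        Real.exp K / d * (2 * A * A' / (2 * S))) / S ^ 2 / (Real.exp K / d / S)) =
      2 * A + A * A' / (1 + A ^ 2)
    rw [hsc, ← hS2]
    field_simp
    ring
end

section
/- Let λ ≠ 0, k ≠ 0, and m ∈ ℝ with m ≠ 1, and define x₁(θ) = sin θ/(2λ) − sin((m−1)θ)/(2λ·k·(m−1)) and x₂(θ) = −cos θ/(2λ) − cos((m−1)θ)/(2λ·k·(m−1)). Then for all θ: x₂'(θ)·cos θ − x₁'(θ)·sin θ = sin(mθ)/(2λk) and 1/(2λ) − (x₂'(θ)·sin θ + x₁'(θ)·cos θ) = cos(mθ)/(2λk). -/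
/-- For the curve with `x₁(θ) = sin θ/(2λ) − sin((m−1)θ)/(2λk(m−1))` and
`x₂(θ) = −cos θ/(2λ) − cos((m−1)θ)/(2λk(m−1))`, one has
`A(θ) = x₂'·cos θ − x₁'·sin θ = sin(mθ)/(2λk)` and
`1/(2λ) − (x₂'·sin θ + x₁'·cos θ) = cos(mθ)/(2λk)`. -/
theorem deformation_AB (lam k m : ℝ) (hlam : lam ≠ 0) (hk : k ≠ 0) (hm : m ≠ 1)
    (x₁ x₂ : ℝ → ℝ)
    (hx₁ : ∀ θ : ℝ,
      x₁ θ = Real.sin θ / (2 * lam) - Real.sin ((m - 1) * θ) / (2 * lam * k * (m - 1)))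
    (hx₂ : ∀ θ : ℝ,
      x₂ θ = -Real.cos θ / (2 * lam) - Real.cos ((m - 1) * θ) / (2 * lam * k * (m - 1))) :
    ∀ θ : ℝ,
      deriv x₂ θ * Real.cos θ - deriv x₁ θ * Real.sin θ = Real.sin (m * θ) / (2 * lam * k) ∧
      1 / (2 * lam) - (deriv x₂ θ * Real.sin θ + deriv x₁ θ * Real.cos θ)
        = Real.cos (m * θ) / (2 * lam * k) := by
  have hm' : m - 1 ≠ 0 := sub_ne_zero.mpr hm
  intro θ
  have hc : HasDerivAt (fun θ : ℝ => (m - 1) * θ) (m - 1) θ := by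
    simpa using (hasDerivAt_id θ).const_mul (m - 1)
  have h1 : HasDerivAt x₁
      (Real.cos θ / (2 * lam) - Real.cos ((m - 1) * θ) * (m - 1) / (2 * lam * k * (m - 1)))
      θ := by
    rw [funext hx₁]
    exact ((Real.hasDerivAt_sin θ).div_const _).sub
      (((Real.hasDerivAt_sin _).comp θ hc).div_const _)
  have h2 : HasDerivAt x₂
      (Real.sin θ / (2 * lam) - (-Real.sin ((m - 1) * θ)) * (m - 1) / (2 * lam * k * (m - 1)))
      θ := by
    rw [funext hx₂]
    have := (((Real.hasDerivAt_cos θ).div_const (2 * lam)).neg).sub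
      (((Real.hasDerivAt_cos _).comp θ hc).div_const (2 * lam * k * (m - 1)))
    simpa [neg_div, Pi.neg_def, Pi.sub_def] using this
  rw [h1.deriv, h2.deriv]
  have hsin : Real.sin (m * θ) = Real.sin ((m - 1) * θ) * Real.cos θ
      + Real.cos ((m - 1) * θ) * Real.sin θ := by
    rw [show m * θ = (m - 1) * θ + θ by ring, Real.sin_add]
  have hcos : Real.cos (m * θ) = Real.cos ((m - 1) * θ) * Real.cos θ
      - Real.sin ((m - 1) * θ) * Real.sin θ := by
    rw [show m * θ = (m - 1) * θ + θ by ring, Real.cos_add]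
  have hpyth := Real.sin_sq_add_cos_sq θ
  refine ⟨?_, ?_⟩
  · rw [hsin]; field_simp; ring
  · rw [hcos]; field_simp
    linear_combination (-k) * hpyth
end

section
/- Let c ≠ 0 and k ≥ 1, set r = (2/c²)·√(k − 1) and E = (k − 2)/(2c), and define u(s) = k/c² + r·cos(c·s) and t(s) = −s/c − (r/2)·sin(c·s). Then for all s ∈ ℝ: (i) t'(s) = E − (c/2)·u(s), and (ii) u'(s)² + 4·t'(s)² = 4·u(s). In particular, at every s with u(s) > 0, setting x(s) = √(u(s)) one has x'(s)² + t'(s)²/x(s)² = 1 and t'(s) = E − (c/2)·x(s)². -/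
/-- The curve `(x, t)` with `x² = u = k/c² + r·cos(c·s)`, `t = −s/c − (r/2)·sin(c·s)`,
where `r = (2/c²)·√(k − 1)` and `E = (k − 2)/(2c)`, satisfies `t' = E − (c/2)·u` and
`u'² + 4·t'² = 4·u`; hence wherever `u > 0` and `x = √u`, the curve has unit horizontal
speed `x'² + t'²/x² = 1` and energy `t' = E − (c/2)·x²`. -/
theorem generating_curve_verification (c k : ℝ) (hc : c ≠ 0) (hk : 1 ≤ k)
    (r E : ℝ) (hr : r = (2 / c ^ 2) * Real.sqrt (k - 1)) (hE : E = (k - 2) / (2 * c))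
    (u t : ℝ → ℝ)
    (hu : ∀ s : ℝ, u s = k / c ^ 2 + r * Real.cos (c * s))
    (ht : ∀ s : ℝ, t s = -s / c - (r / 2) * Real.sin (c * s)) :
    (∀ s : ℝ, deriv t s = E - (c / 2) * u s) ∧
    (∀ s : ℝ, (deriv u s) ^ 2 + 4 * (deriv t s) ^ 2 = 4 * u s) ∧
    (∀ s : ℝ, 0 < u s →
      (deriv (fun σ => Real.sqrt (u σ)) s) ^ 2 + (deriv t s) ^ 2 / (Real.sqrt (u s)) ^ 2 = 1 ∧
      deriv t s = E - (c / 2) * (Real.sqrt (u s)) ^ 2) := by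
  have hfun_u : u = fun s => k / c ^ 2 + r * Real.cos (c * s) := funext hu
  have hfun_t : t = fun s => -s / c - (r / 2) * Real.sin (c * s) := funext ht
  have hcs : ∀ s : ℝ, HasDerivAt (fun σ : ℝ => c * σ) c s := by
    intro s
    simpa using (hasDerivAt_id s).const_mul c
  have hdu : ∀ s : ℝ, HasDerivAt u (-(r * c * Real.sin (c * s))) s := by
    intro s
    rw [hfun_u]
    have h1 : HasDerivAt (fun σ : ℝ => Real.cos (c * σ)) (-Real.sin (c * s) * c) s :=
      (Real.hasDerivAt_cos (c * s)).comp s (hcs s)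
    have := (h1.const_mul r).const_add (k / c ^ 2)
    exact this.congr_deriv (by ring)
  have hdt : ∀ s : ℝ, HasDerivAt t (-(1 / c) - r / 2 * (Real.cos (c * s) * c)) s := by
    intro s
    rw [hfun_t]
    have h1 : HasDerivAt (fun σ : ℝ => Real.sin (c * σ)) (Real.cos (c * s) * c) s :=
      (Real.hasDerivAt_sin (c * s)).comp s (hcs s)
    have h2 : HasDerivAt (fun σ : ℝ => -σ / c) (-(1 / c)) s := by
      have := (hasDerivAt_id s).neg.div_const c
      exact this.congr_deriv (by ring)
    exact h2.sub (h1.const_mul (r / 2))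
  have hdtv : ∀ s : ℝ, deriv t s = -(1 / c) - r / 2 * (Real.cos (c * s) * c) :=
    fun s => (hdt s).deriv
  have hduv : ∀ s : ℝ, deriv u s = -(r * c * Real.sin (c * s)) :=
    fun s => (hdu s).deriv
  have hT : ∀ s : ℝ, deriv t s = E - (c / 2) * u s := by
    intro s
    rw [hdtv, hu, hE]
    field_simp
    ring
  have hmain : ∀ s : ℝ, (deriv u s) ^ 2 + 4 * (deriv t s) ^ 2 = 4 * u s := by
    intro s
    have hr2 : r ^ 2 = 4 * (k - 1) / c ^ 4 := by
      rw [hr, mul_pow, Real.sq_sqrt (by linarith)]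
      ring
    have hpy : Real.sin (c * s) ^ 2 = 1 - Real.cos (c * s) ^ 2 := by
      have := Real.sin_sq_add_cos_sq (c * s); linarith
    have hr2' : r ^ 2 * c ^ 4 = 4 * (k - 1) := by
      rw [hr2]; field_simp
    have hsc := Real.sin_sq_add_cos_sq (c * s)
    rw [hdtv, hduv, hu]
    have hc2 : c ^ 2 ≠ 0 := pow_ne_zero 2 hc
    field_simp
    linear_combination (4 * r ^ 2 * c ^ 4) * hsc + 4 * hr2'
  refine ⟨hT, hmain, ?_⟩
  intro s hs
  have hx : Real.sqrt (u s) ^ 2 = u s := Real.sq_sqrt hs.le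
  have hune : u s ≠ 0 := ne_of_gt hs
  constructor
  · have hdx : deriv (fun σ => Real.sqrt (u σ)) s = deriv u s / (2 * Real.sqrt (u s)) := by
      rw [hduv]
      exact ((hdu s).sqrt hune).deriv
    have h2 : (2 * Real.sqrt (u s)) ^ 2 = 4 * u s := by
      rw [mul_pow, hx]; ring
    rw [hdx, hx, div_pow, h2]
    field_simp
    linear_combination hmain s
  · rw [hx]; exact hT s
end
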